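/- Let p : F → E be a functor, f : ξ → ξ' a cartesian morphism lying over φ : S → S', G a finite group, P ⊆ G a subgroup of index m, and ρ : G → Aut_S(ξ) a group homomorphism. Assume the kernel A = Aut_ξ(ξ') of the restriction homomorphism res : Aut_{S'}(ξ') → Aut_S(ξ) is abelian and uniquely m-divisible. Suppose that for every σ ∈ G there exists σ' ∈ Aut_{S'}(ξ') with res(σ') = ρ(σ). Then there exists a group homomorphism ρ' : G → Aut_{S'}(ξ') with res ∘ ρ' = ρ if and only if there exists a group homomorphism ρ'_P : P → Aut_{S'}(ξ') with res ∘ ρ'_P = ρ|_P. -/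

import Mathlib

open CategoryTheory

/-- A morphism `f : ξ ⟶ ξ'` is cartesian for the functor `p : F ⥤ E` if for every
object `ζ` lying over `S = p.obj ξ`, composition with `f` gives a bijection between
morphisms `ζ ⟶ ξ` lying over `𝟙 S` and morphisms `ζ ⟶ ξ'` lying over `φ = p.map f`. -/
def IsCartesianMor {F E : Type*} [Category F] [Category E] (p : F ⥤ E)
    {ξ ξ' : F} (f : ξ ⟶ ξ') : Prop :=
  ∀ (ζ : F) (e : p.obj ζ = p.obj ξ),
    Function.Bijective (fun h : {h : ζ ⟶ ξ // p.map h = eqToHom e} =>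
      (⟨h.1 ≫ f, by rw [p.map_comp, h.2]⟩ :
        {g : ζ ⟶ ξ' // p.map g = eqToHom e ≫ p.map f}))

/-- The subgroup of `Aut ξ` consisting of automorphisms lying over the identity
of `S = p.obj ξ`. -/
def vertAut {F E : Type*} [Category F] [Category E] (p : F ⥤ E) (ξ : F) :
    Subgroup (Aut ξ) where
  carrier := {σ | p.map σ.hom = 𝟙 (p.obj ξ)}
  one_mem' := p.map_id ξ
  mul_mem' := by
    intro σ τ hσ hτ
    show p.map (τ.hom ≫ σ.hom) = 𝟙 _
    rw [p.map_comp, hσ, hτ, Category.id_comp]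
  inv_mem' := by
    intro σ hσ
    show p.map σ.symm.hom = 𝟙 _
    have h : p.map σ.hom = 𝟙 _ := hσ
    calc p.map σ.inv = p.map σ.hom ≫ p.map σ.inv := by rw [h, Category.id_comp]
      _ = p.map (σ.hom ≫ σ.inv) := (p.map_comp _ _).symm
      _ = 𝟙 _ := by exact (congrArg p.map (Iso.hom_inv_id (σ : ξ ≅ ξ))).trans (p.map_id _)


/-- Sylow-type reduction for extending group actions: if `P ⊆ G` has index `m`,
the kernel `A = Aut_ξ(ξ')` of the restriction homomorphism is abelian and uniquely
`m`-divisible, and every `ρ(σ)` lies in the image of `res`, then the `G`-action on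
`ξ` extends to `ξ'` if and only if the `P`-action extends. -/
theorem my_gaschutz {H K G : Type*} [Group H] [Group K] [Group G] [Finite G]
    (P : Subgroup G) (m : ℕ) (hm : P.index = m)
    (ρ : G →* K) (res : H →* K)
    (hA : ∀ a b : H, a ∈ res.ker → b ∈ res.ker → a * b = b * a)
    (hdiv : ∀ h : H, h ∈ res.ker → ∃! g : H, g ∈ res.ker ∧ g ^ m = h)
    (hsurj : ∀ σ : G, ρ σ ∈ res.range)
    (ρ'P : P →* H) (hcompP : res.comp ρ'P = ρ.comp P.subtype) :
    ∃ ρ' : G →* H, res.comp ρ' = ρ := by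
  classical
  haveI : Fintype (G ⧸ P) := Fintype.ofFinite _
  letI : CommGroup res.ker :=
    { (inferInstance : Group res.ker) with
      mul_comm := fun a b => Subtype.ext (hA a b a.2 b.2) }
  have hP : ∀ π : P, res (ρ'P π) = ρ π := fun π => DFunLike.congr_fun hcompP π
  choose t ht using fun σ => MonoidHom.mem_range.mp (hsurj σ)
  have hmemP : ∀ g : G, (QuotientGroup.mk g : G ⧸ P).out⁻¹ * g ∈ P := fun g =>
    QuotientGroup.eq.mp (QuotientGroup.out_eq' _)
  let s : G → H := fun g =>
    t (QuotientGroup.mk g : G ⧸ P).out * ρ'P ⟨_, hmemP g⟩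
  have hs1 : ∀ g, res (s g) = ρ g := fun g => by
    show res (t _ * ρ'P _) = ρ g
    rw [map_mul, ht, hP, ← map_mul]
    congr 1
    exact mul_inv_cancel_left _ _
  have hs2 : ∀ (g : G) (π : P), s (g * π) = s g * ρ'P π := fun g π => by
    have hq : (QuotientGroup.mk (g * ↑π) : G ⧸ P).out
        = (QuotientGroup.mk g : G ⧸ P).out := by
      rw [QuotientGroup.mk_mul_of_mem g π.2]
    show t (QuotientGroup.mk (g * ↑π) : G ⧸ P).out * ρ'P ⟨_, hmemP (g * ↑π)⟩
        = t (QuotientGroup.mk g : G ⧸ P).out * ρ'P ⟨_, hmemP g⟩ * ρ'P π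
    have h2 : (⟨_, hmemP (g * ↑π)⟩ : P) = ⟨_, hmemP g⟩ * π := by
      apply Subtype.ext
      show (QuotientGroup.mk (g * ↑π) : G ⧸ P).out⁻¹ * (g * ↑π)
          = ((QuotientGroup.mk g : G ⧸ P).out⁻¹ * g) * ↑π
      rw [hq, mul_assoc]
    rw [h2, hq, map_mul, mul_assoc]
  -- the 2-cocycle
  have hcmem : ∀ g h : G, s g * s h * (s (g * h))⁻¹ ∈ res.ker := fun g h => by
    simp [MonoidHom.mem_ker, hs1, map_mul, mul_assoc]
  let c : G → G → ↥res.ker := fun g h => ⟨s g * s h * (s (g * h))⁻¹, hcmem g h⟩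
  -- conjugation action on the kernel
  have hφmem : ∀ (g : G) (a : ↥res.ker), s g * ↑a * (s g)⁻¹ ∈ res.ker := fun g a => by
    have := MonoidHom.mem_ker.mp a.2
    simp [MonoidHom.mem_ker, hs1, this]
  let φ : G → (↥res.ker →* ↥res.ker) := fun g =>
    MonoidHom.mk' (fun a => ⟨s g * ↑a * (s g)⁻¹, hφmem g a⟩) (fun a b => by
      apply Subtype.ext
      show s g * ↑(a * b) * (s g)⁻¹ = (s g * ↑a * (s g)⁻¹) * (s g * ↑b * (s g)⁻¹)
      rw [Subgroup.coe_mul]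
      group)
  -- cocycle identity
  have key : ∀ g h k, c g h * c (g * h) k = φ g (c h k) * c g (h * k) := fun g h k => by
    apply Subtype.ext
    show (s g * s h * (s (g * h))⁻¹) * (s (g * h) * s k * (s ((g * h) * k))⁻¹)
        = (s g * (s h * s k * (s (h * k))⁻¹) * (s g)⁻¹) * (s g * s (h * k) * (s (g * (h * k)))⁻¹)
    rw [mul_assoc g h k]
    group
  -- right P-invariance
  have hcP : ∀ (g h : G) (π : P), c g (h * ↑π) = c g h := fun g h π => by
    apply Subtype.ext
    show s g * s (h * ↑π) * (s (g * (h * ↑π)))⁻¹ = s g * s h * (s (g * h))⁻¹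
    rw [hs2 h π, show g * (h * ↑π) = (g * h) * ↑π from (mul_assoc _ _ _).symm, hs2 (g * h) π]
    group
  have hcbar : ∀ g h : G, c g h = c g (QuotientGroup.mk h : G ⧸ P).out := fun g h => by
    have hh : h = (QuotientGroup.mk h : G ⧸ P).out
        * ((QuotientGroup.mk h : G ⧸ P).out⁻¹ * h) := by group
    conv_lhs => rw [hh]
    exact hcP g _ ⟨_, hmemP h⟩
  have hm' : Fintype.card (G ⧸ P) = m := by
    rw [← hm, Subgroup.index_eq_card, Nat.card_eq_fintype_card]
  let Eg : G → ↥res.ker := fun g => ∏ q : G ⧸ P, c g q.out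
  have hkey2 : ∀ g h, (c g h) ^ m * Eg (g * h) = φ g (Eg h) * Eg g := fun g h => by
    have h1 : ∏ q : G ⧸ P, (c g h * c (g * h) q.out)
        = ∏ q : G ⧸ P, (φ g (c h q.out) * c g (h * q.out)) :=
      Finset.prod_congr rfl (fun q _ => key g h q.out)
    rw [Finset.prod_mul_distrib, Finset.prod_mul_distrib, Finset.prod_const,
      Finset.card_univ, hm', ← map_prod] at h1
    have h2 : ∏ q : G ⧸ P, c g (h * q.out) = Eg g := by
      have h3 : ∀ q : G ⧸ P, c g (h * q.out) = c g ((h • q).out) := fun q => by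
        rw [hcbar g (h * q.out)]
        congr 2
        rw [← smul_eq_mul, MulAction.Quotient.mk_smul_out]
      calc ∏ q : G ⧸ P, c g (h * q.out) = ∏ q : G ⧸ P, c g ((h • q).out) :=
            Finset.prod_congr rfl (fun q _ => h3 q)
        _ = ∏ q : G ⧸ P, c g q.out :=
            Fintype.prod_equiv (MulAction.toPerm h) _ _ (fun q => rfl)
    rw [h2] at h1
    exact h1
  -- m-th roots
  have hroot : ∀ g : G, ∃ a : ↥res.ker, a ^ m = Eg g := fun g => by
    obtain ⟨x, ⟨hxk, hxm⟩, -⟩ := hdiv ↑(Eg g) (Eg g).2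
    exact ⟨⟨x, hxk⟩, Subtype.ext (by rw [SubmonoidClass.coe_pow]; exact hxm)⟩
  choose e he using hroot
  have hinj : ∀ a b : ↥res.ker, a ^ m = b ^ m → a = b := fun a b hab => by
    obtain ⟨x, -, hu⟩ := hdiv ↑(a ^ m) (a ^ m).2
    have ha : (a : H) = x := hu ↑a ⟨a.2, (SubmonoidClass.coe_pow a m).symm⟩
    have hb : (b : H) = x := hu ↑b ⟨b.2, by rw [← SubmonoidClass.coe_pow, ← hab]⟩
    exact Subtype.ext (ha.trans hb.symm)
  have hclaim : ∀ g h, c g h = e g * φ g (e h) * (e (g * h))⁻¹ := fun g h => by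
    apply hinj
    rw [mul_pow, mul_pow, inv_pow, ← map_pow, he, he, he]
    calc (c g h) ^ m = φ g (Eg h) * Eg g * (Eg (g * h))⁻¹ :=
          eq_mul_inv_of_mul_eq (hkey2 g h)
      _ = Eg g * φ g (Eg h) * (Eg (g * h))⁻¹ := by rw [mul_comm (φ g (Eg h)) (Eg g)]
  -- build the extension
  refine ⟨MonoidHom.mk' (fun g => (↑(e g))⁻¹ * s g) ?_, ?_⟩
  · intro g h
    have h1 : (↑(c g h) : H) = s g * s h * (s (g * h))⁻¹ := rfl
    have h2 : (↑(c g h) : H) = ↑(e g) * (s g * ↑(e h) * (s g)⁻¹) * (↑(e (g * h)))⁻¹ := by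
      rw [hclaim g h]; rfl
    have hmem1 : s g * (↑(e h))⁻¹ * (s g)⁻¹ ∈ res.ker := by
      have := MonoidHom.mem_ker.mp (e h).2
      simp [MonoidHom.mem_ker, hs1, this]
    have hcomm : (s g * (↑(e h))⁻¹ * (s g)⁻¹) * (↑(e g))⁻¹
        = (↑(e g))⁻¹ * (s g * (↑(e h))⁻¹ * (s g)⁻¹) :=
      hA _ _ hmem1 (inv_mem (e g).2)
    calc (↑(e (g * h)))⁻¹ * s (g * h)
        = (↑(e (g * h)))⁻¹ * ((s g * s h * (s (g * h))⁻¹)⁻¹ * (s g * s h)) := by group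
      _ = (↑(e (g * h)))⁻¹ * ((↑(e g) * (s g * ↑(e h) * (s g)⁻¹) * (↑(e (g * h)))⁻¹)⁻¹
            * (s g * s h)) := by rw [← h1, h2]
      _ = (s g * (↑(e h))⁻¹ * (s g)⁻¹) * (↑(e g))⁻¹ * (s g * s h) := by group
      _ = (↑(e g))⁻¹ * (s g * (↑(e h))⁻¹ * (s g)⁻¹) * (s g * s h) := by rw [hcomm]
      _ = ((↑(e g))⁻¹ * s g) * ((↑(e h))⁻¹ * s h) := by group
  · ext g
    show res ((↑(e g))⁻¹ * s g) = ρ g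
    rw [map_mul, map_inv, MonoidHom.mem_ker.mp (e g).2, hs1, inv_one, one_mul]

/-- Sylow-type reduction -/
theorem extension_iff_extension_on_subgroup {F E : Type*} [Category F] [Category E]
    (p : F ⥤ E) {ξ ξ' : F} (f : ξ ⟶ ξ') (hf : IsCartesianMor p f)
    {G : Type*} [Group G] [Finite G] (P : Subgroup G) (m : ℕ) (hm : P.index = m)
    (ρ : G →* vertAut p ξ)
    (res : vertAut p ξ' →* vertAut p ξ)
    (hres : ∀ σ' : vertAut p ξ',
      f ≫ (σ' : Aut ξ').hom = ((res σ' : Aut ξ)).hom ≫ f)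
    (hA : ∀ a b : vertAut p ξ', a ∈ res.ker → b ∈ res.ker → a * b = b * a)
    (hdiv : ∀ h : vertAut p ξ', h ∈ res.ker →
      ∃! g : vertAut p ξ', g ∈ res.ker ∧ g ^ m = h)
    (hsurj : ∀ σ : G, ρ σ ∈ res.range) :
    (∃ ρ' : G →* vertAut p ξ', res.comp ρ' = ρ) ↔
      (∃ ρ'P : P →* vertAut p ξ', res.comp ρ'P = ρ.comp P.subtype) := by
  constructor
  · rintro ⟨ρ', h⟩
    exact ⟨ρ'.comp P.subtype, by rw [← MonoidHom.comp_assoc, h]⟩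
  · rintro ⟨ρ'P, h⟩
    exact my_gaschutz P m hm ρ res hA hdiv hsurj ρ'P h
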